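/- Let X be a uniformly convex real Banach space, let C be a nonempty closed convex subset of X, and let T : C → C be a (c)-mapping. If there exists x₀ ∈ C such that the orbit O(x₀) = {Tⁿx₀ : n ≥ 0} is bounded, then T has a fixed point in C. -/

import Mathlib

/-- `T` is a (c)-mapping on `C`. -/
def IsCMapping {X : Type*} [NormedAddCommGroup X] (T : X → X) (C : Set X) : Prop :=
  ∃ a c : ℝ, a ∈ Set.Icc (0 : ℝ) 1 ∧ c ∈ Set.Icc (0 : ℝ) 1 ∧ 0 < c ∧ a + 2 * c = 1 ∧
    ∀ x ∈ C, ∀ y ∈ C, ‖T x - T y‖ ≤ a * ‖x - y‖ + c * (‖T x - y‖ + ‖T y - x‖)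

private lemma real_le_of_forall_pos_le_add' {a b : ℝ} (h : ∀ ε > 0, a ≤ b + ε) : a ≤ b := by
  by_contra h'
  push_neg at h'
  linarith [h ((a - b) / 2) (by linarith)]

/-- A (c)-mapping of a nonempty closed convex subset of a uniformly convex
real Banach space into itself having a bounded orbit has a fixed point. -/
theorem c_mapping_fixed_point_of_bounded_orbit
    {X : Type*} [NormedAddCommGroup X] [NormedSpace ℝ X] [CompleteSpace X]
    [UniformConvexSpace X]
    (C : Set X) (hne : C.Nonempty) (hclosed : IsClosed C) (hconv : Convex ℝ C)
    (T : X → X) (hT : Set.MapsTo T C C) (hc : IsCMapping T C)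
    (x₀ : X) (hx₀ : x₀ ∈ C)
    (horbit : Bornology.IsBounded (Set.range fun n : ℕ => T^[n] x₀)) :
    ∃ x ∈ C, T x = x := by
  -- the orbit lies in C
  have hmem : ∀ n, T^[n] x₀ ∈ C := by
    intro n
    induction n with
    | zero => exact hx₀
    | succ n ih => rw [Function.iterate_succ_apply']; exact hT ih
  -- norm bound on the orbit
  obtain ⟨M, hM⟩ : ∃ M, ∀ n : ℕ, ‖T^[n] x₀‖ ≤ M := by
    obtain ⟨M, hM⟩ := isBounded_iff_forall_norm_le.1 horbit
    exact ⟨M, fun n => hM _ ⟨n, rfl⟩⟩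
  set f : X → ℝ := fun v => Filter.limsup (fun n => ‖T^[n] x₀ - v‖) Filter.atTop with hf
  have hb : ∀ v : X, Filter.IsBoundedUnder (· ≤ ·) Filter.atTop
      (fun n => ‖T^[n] x₀ - v‖) := fun v =>
    Filter.isBoundedUnder_of ⟨M + ‖v‖, fun n =>
      (norm_sub_le _ _).trans (add_le_add (hM n) le_rfl)⟩
  have hcob : ∀ v : X, Filter.IsCoboundedUnder (· ≤ ·) Filter.atTop
      (fun n => ‖T^[n] x₀ - v‖) := fun v =>
    Filter.IsBoundedUnder.isCoboundedUnder_le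
      (Filter.isBoundedUnder_of ⟨0, fun n => norm_nonneg _⟩)
  have f_le : ∀ v : X, ∀ B : ℝ, (∀ᶠ n in Filter.atTop, ‖T^[n] x₀ - v‖ ≤ B) → f v ≤ B :=
    fun v B h => Filter.limsup_le_of_le (hcob v) h
  have f_lt_ev : ∀ v : X, ∀ b : ℝ, f v < b → ∀ᶠ n in Filter.atTop, ‖T^[n] x₀ - v‖ < b :=
    fun v b h => Filter.eventually_lt_of_limsup_lt h (hb v)
  have f_nonneg : ∀ v : X, 0 ≤ f v := fun v =>
    Filter.le_limsup_of_frequently_le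
      ((Filter.Eventually.of_forall fun n => norm_nonneg _).frequently) (hb v)
  have f_lip : ∀ v w : X, f v ≤ f w + ‖v - w‖ := by
    intro v w
    refine real_le_of_forall_pos_le_add' fun ε hε => ?_
    have h2 := f_lt_ev w (f w + ε) (by linarith)
    have h3 : f v ≤ f w + ε + ‖w - v‖ := by
      refine f_le v _ (h2.mono fun n hn => ?_)
      calc ‖T^[n] x₀ - v‖ ≤ ‖T^[n] x₀ - w‖ + ‖w - v‖ := by
              have h4 : T^[n] x₀ - v = (T^[n] x₀ - w) + (w - v) := by abel
              rw [h4]; exact norm_add_le _ _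
        _ ≤ f w + ε + ‖w - v‖ := by linarith
    rw [norm_sub_rev v w]
    linarith
  set r₀ : ℝ := sInf (f '' C) with hr₀
  have hbddb : BddBelow (f '' C) := ⟨0, by rintro y ⟨v, hv, rfl⟩; exact f_nonneg v⟩
  have hne' : (f '' C).Nonempty := ⟨f x₀, x₀, hx₀, rfl⟩
  have hr₀le : ∀ v ∈ C, r₀ ≤ f v := fun v hv => csInf_le hbddb ⟨v, hv, rfl⟩
  have hr₀nonneg : 0 ≤ r₀ := le_csInf hne' (by rintro y ⟨v, hv, rfl⟩; exact f_nonneg v)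
  -- Key uniform-convexity estimate: near-minimizers are close together.
  have key : ∀ d : ℝ, 0 < d → ∃ ε > 0, ∀ p ∈ C, ∀ q ∈ C,
      f p < r₀ + ε → f q < r₀ + ε → ‖p - q‖ ≤ d := by
    intro d hd
    rcases eq_or_lt_of_le hr₀nonneg with h0 | hpos
    · refine ⟨d / 2, by positivity, fun p hp q hq hfp hfq => ?_⟩
      obtain ⟨n, hn1, hn2⟩ := ((f_lt_ev p _ hfp).and (f_lt_ev q _ hfq)).exists
      have h5 : p - q = (T^[n] x₀ - q) - (T^[n] x₀ - p) := by abel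
      calc ‖p - q‖ = ‖(T^[n] x₀ - q) - (T^[n] x₀ - p)‖ := by rw [← h5]
        _ ≤ ‖T^[n] x₀ - q‖ + ‖T^[n] x₀ - p‖ := norm_sub_le _ _
        _ ≤ d := by rw [← h0] at hn1 hn2; linarith
    · obtain ⟨δ, hδ, hδball⟩ :=
        exists_forall_closed_ball_dist_add_le_two_sub X
          (div_pos hd (by linarith : (0:ℝ) < r₀ + 1))
      refine ⟨min 1 (δ * r₀ / 4), by positivity, fun p hp q hq hfp hfq => ?_⟩
      by_contra hcon
      push_neg at hcon
      set ε : ℝ := min 1 (δ * r₀ / 4) with hεdef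
      have hεpos : 0 < ε := by positivity
      have hε1 : ε ≤ 1 := min_le_left _ _
      have hε2 : ε ≤ δ * r₀ / 4 := min_le_right _ _
      set R : ℝ := r₀ + ε with hRdef
      have hRpos : 0 < R := by positivity
      have hR1 : R ≤ r₀ + 1 := by simp only [hRdef]; linarith
      set m : X := (1/2 : ℝ) • p + (1/2 : ℝ) • q with hmdef
      have hmC : m ∈ C := hconv hp hq (by norm_num) (by norm_num) (by norm_num)
      have ev : ∀ᶠ n in Filter.atTop, ‖T^[n] x₀ - m‖ ≤ (1 - δ / 2) * R := by
        refine ((f_lt_ev p _ hfp).and (f_lt_ev q _ hfq)).mono fun n hn => ?_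
        obtain ⟨h1, h2⟩ := hn
        set aa : X := R⁻¹ • (T^[n] x₀ - p) with haa
        set bb : X := R⁻¹ • (T^[n] x₀ - q) with hbb
        have hna : ‖aa‖ ≤ 1 := by
          rw [haa, norm_smul, Real.norm_eq_abs, abs_of_pos (inv_pos.2 hRpos),
            inv_mul_le_iff₀ hRpos, mul_one]
          exact h1.le
        have hnb : ‖bb‖ ≤ 1 := by
          rw [hbb, norm_smul, Real.norm_eq_abs, abs_of_pos (inv_pos.2 hRpos),
            inv_mul_le_iff₀ hRpos, mul_one]
          exact h2.le
        have hsub : aa - bb = R⁻¹ • (q - p) := by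
          rw [haa, hbb, ← smul_sub]
          congr 1
          abel
        have hdist : d / (r₀ + 1) ≤ ‖aa - bb‖ := by
          rw [hsub, norm_smul, Real.norm_eq_abs, abs_of_pos (inv_pos.2 hRpos),
            ← div_eq_inv_mul]
          have hqp : d ≤ ‖q - p‖ := by rw [norm_sub_rev]; exact hcon.le
          exact div_le_div₀ (norm_nonneg _) hqp hRpos hR1
        have happ : ‖aa + bb‖ ≤ 2 - δ := hδball hna hnb hdist
        have hid : T^[n] x₀ - m = (R / 2) • (aa + bb) := by
          rw [haa, hbb, smul_add, smul_smul, smul_smul]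
          have hRR : R / 2 * R⁻¹ = 1 / 2 := by field_simp
          rw [hRR, hmdef]
          module
        calc ‖T^[n] x₀ - m‖ = (R / 2) * ‖aa + bb‖ := by
              rw [hid, norm_smul, Real.norm_eq_abs, abs_of_pos (by positivity : (0:ℝ) < R / 2)]
          _ ≤ (R / 2) * (2 - δ) := by
              exact mul_le_mul_of_nonneg_left happ (by positivity)
          _ = (1 - δ / 2) * R := by ring
      have hfm : f m ≤ (1 - δ / 2) * R := f_le _ _ (ev.mono fun n hn => hn)
      have hrm : r₀ ≤ f m := hr₀le m hmC
      have hprod : 0 < δ * ε := mul_pos hδ hεpos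
      nlinarith [hfm, hrm, hε2, hprod, hεpos, hδ, hpos]
  -- minimizing sequence
  have hseq : ∀ k : ℕ, ∃ v ∈ C, f v < r₀ + 1 / (k + 1) := by
    intro k
    obtain ⟨y, hy, hylt⟩ :=
      Real.lt_sInf_add_pos hne' (by positivity : (0:ℝ) < 1 / (k + 1))
    obtain ⟨v, hv, rfl⟩ := hy
    exact ⟨v, hv, hylt⟩
  choose w hwC hwf using hseq
  have hmono : ∀ {N k : ℕ}, N ≤ k → (1:ℝ) / (k + 1) ≤ 1 / (N + 1) := by
    intro N k hNk
    apply one_div_le_one_div_of_le (by positivity)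
    exact_mod_cast Nat.succ_le_succ hNk
  have hcauchy : CauchySeq w := by
    rw [Metric.cauchySeq_iff]
    intro εc hεc
    obtain ⟨ε, hεpos, hkey⟩ := key (εc / 2) (half_pos hεc)
    obtain ⟨N, hN⟩ := exists_nat_one_div_lt hεpos
    refine ⟨N, fun n hn k hk => ?_⟩
    have h1 : f (w n) < r₀ + ε := by
      have := hwf n
      have h2 := hmono hn
      linarith
    have h2 : f (w k) < r₀ + ε := by
      have := hwf k
      have h3 := hmono hk
      linarith
    rw [dist_eq_norm]
    exact lt_of_le_of_lt (hkey _ (hwC n) _ (hwC k) h1 h2) (half_lt_self hεc)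
  obtain ⟨z, hz⟩ := cauchySeq_tendsto_of_complete hcauchy
  have hzC : z ∈ C := hclosed.mem_of_tendsto hz (Filter.Eventually.of_forall hwC)
  have hfzle : f z ≤ r₀ := by
    refine real_le_of_forall_pos_le_add' fun ε hε => ?_
    obtain ⟨N, hN⟩ := exists_nat_one_div_lt (half_pos hε)
    obtain ⟨N2, hN2⟩ := Metric.tendsto_atTop.1 hz (ε / 2) (half_pos hε)
    set k := max N N2 with hk
    have h1 : f z ≤ f (w k) + ‖z - w k‖ := f_lip z (w k)
    have h2 : f (w k) < r₀ + 1 / (k + 1) := hwf k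
    have h3 : (1:ℝ) / (k + 1) ≤ 1 / (N + 1) := hmono (le_max_left _ _)
    have h4 : ‖z - w k‖ < ε / 2 := by
      have := hN2 k (le_max_right _ _)
      rw [dist_eq_norm] at this
      rw [norm_sub_rev]
      exact this
    linarith
  have hfz : f z = r₀ := le_antisymm hfzle (hr₀le z hzC)
  -- f (T z) ≤ f z via the (c)-mapping condition
  obtain ⟨a, c, ⟨ha0, ha1⟩, ⟨hc0, hc1⟩, hcpos, habc, hineq⟩ := hc
  have hTzC : T z ∈ C := hT hzC
  have h1c : 0 < 1 - c := by linarith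
  have hfT : f (T z) ≤ f z := by
    have main : ∀ ε > 0, (1 - c) * f (T z) ≤ (1 - c) * f z + ε := by
      intro ε hε
      obtain ⟨N1, h1⟩ := Filter.eventually_atTop.1 (f_lt_ev z (f z + ε) (by linarith))
      obtain ⟨N2, h2⟩ := Filter.eventually_atTop.1 (f_lt_ev (T z) (f (T z) + ε) (by linarith))
      have hb2 : f (T z) ≤ a * (f z + ε) + c * ((f (T z) + ε) + (f z + ε)) := by
        apply f_le
        rw [Filter.eventually_atTop]
        refine ⟨max N1 N2 + 1, fun n hn => ?_⟩
        obtain ⟨k, rfl⟩ : ∃ k, n = k + 1 :=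
          ⟨n - 1, (Nat.succ_pred_eq_of_pos (by omega)).symm⟩
        have hk1 : N1 ≤ k := by omega
        have hk2 : N2 ≤ k := by omega
        have e1 := h1 k hk1
        have e2 := h2 k hk2
        have e3 := h1 (k + 1) (by omega)
        have step := hineq z hzC (T^[k] x₀) (hmem k)
        have hTT : T (T^[k] x₀) = T^[k+1] x₀ := (Function.iterate_succ_apply' T k x₀).symm
        rw [hTT] at step
        calc ‖T^[k+1] x₀ - T z‖ = ‖T z - T^[k+1] x₀‖ := norm_sub_rev _ _
          _ ≤ a * ‖z - T^[k] x₀‖ + c * (‖T z - T^[k] x₀‖ + ‖T^[k+1] x₀ - z‖) := step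
          _ ≤ a * (f z + ε) + c * ((f (T z) + ε) + (f z + ε)) := by
              rw [norm_sub_rev z, norm_sub_rev (T z)]
              have := mul_le_mul_of_nonneg_left e1.le ha0
              have := mul_le_mul_of_nonneg_left (add_le_add e2.le e3.le) hc0
              linarith
      nlinarith [hb2]
    have h5 := real_le_of_forall_pos_le_add' main
    exact le_of_mul_le_mul_left h5 h1c
  -- conclude T z = z
  refine ⟨z, hzC, ?_⟩
  have hfinal : ∀ d > 0, ‖T z - z‖ ≤ d := by
    intro d hd
    obtain ⟨ε, hεpos, hkey⟩ := key d hd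
    have hA : f (T z) < r₀ + ε := by rw [hfz] at hfT; linarith
    have hB : f z < r₀ + ε := by rw [hfz]; linarith
    exact hkey _ hTzC _ hzC hA hB
  have hzero : ‖T z - z‖ ≤ 0 := by
    by_contra h'
    push_neg at h'
    linarith [hfinal (‖T z - z‖ / 2) (by linarith)]
  have : T z - z = 0 := by
    have := le_antisymm hzero (norm_nonneg _)
    exact norm_eq_zero.1 this
  exact sub_eq_zero.1 this
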